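/- Let W be a negative definite even lattice that is not a root overlattice and such that W(−1) has covering radius at most √2. Then in the hyperbolic lattice L = U ⊕ W with U generated by e, f with e² = 0, f² = −2, e.f = 1, every positive (−2)-root r of L with e.r ≥ 2 is not simple: there exists a positive (−2)-root r' with e.r' = 1 and r.r' < 0. -/

import Mathlib

section ChamberMachinery

variable {L : Type*} [AddCommGroup L] [Module ℤ L]

/-- An isometry of the lattice `(L, B)`. -/
def IsIsometry (B : L →ₗ[ℤ] L →ₗ[ℤ] ℤ) (g : L ≃ₗ[ℤ] L) : Prop :=
  ∀ x y : L, B (g x) (g y) = B x y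

/-- `x₀` is a point of the positive cone lying on no mirror of a `(−2)`-root; it
determines a fundamental chamber `𝒟_L` for the Weyl group. -/
def GenericPoint (B : L →ₗ[ℤ] L →ₗ[ℤ] ℤ) (x₀ : L) : Prop :=
  0 < B x₀ x₀ ∧ ∀ r : L, B r r = -2 → B x₀ r ≠ 0

/-- The `(−2)`-roots that are positive with respect to the chamber determined by `x₀`. -/
def PosRoots (B : L →ₗ[ℤ] L →ₗ[ℤ] ℤ) (x₀ : L) : Set L :=
  {r : L | B r r = -2 ∧ 0 < B x₀ r}

/-- A vector is fundamental if it lies in the (closure of the) fundamental chamber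
`𝒟_L` determined by `x₀`, i.e. it lies in the closure of the positive cone and pairs
nonnegatively with all positive `(−2)`-roots. -/
def IsFund (B : L →ₗ[ℤ] L →ₗ[ℤ] ℤ) (x₀ : L) (v : L) : Prop :=
  0 ≤ B v v ∧ 0 ≤ B v x₀ ∧ ∀ r ∈ PosRoots B x₀, 0 ≤ B v r

/-- A nonzero vector is positive if it has nonnegative inner product with all
fundamental vectors. -/
def IsPosVec (B : L →ₗ[ℤ] L →ₗ[ℤ] ℤ) (x₀ : L) (v : L) : Prop :=
  v ≠ 0 ∧ ∀ u : L, IsFund B x₀ u → 0 ≤ B v u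

/-- A positive `(−2)`-root `r` is simple if `r − r'` is not positive for any other
positive `(−2)`-root `r'`. -/
def IsSimpleRoot (B : L →ₗ[ℤ] L →ₗ[ℤ] ℤ) (x₀ : L) (r : L) : Prop :=
  r ∈ PosRoots B x₀ ∧ ∀ r' ∈ PosRoots B x₀, r' ≠ r → ¬ IsPosVec B x₀ (r - r')

/-- A primitive vector of a lattice. -/
def IsPrimitiveVec (v : L) : Prop := ∀ (m : ℤ) (u : L), v = m • u → IsUnit m

/-- A cusp of the fundamental domain: a primitive isotropic vector in `L ∩ 𝒟_L`. -/
def IsLatticeCusp (B : L →ₗ[ℤ] L →ₗ[ℤ] ℤ) (x₀ : L) (e : L) : Prop :=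
  B e e = 0 ∧ IsPrimitiveVec e ∧ IsFund B x₀ e

end ChamberMachinery

private lemma amgm_aux (a b c : ℤ) (ha : 0 ≤ a) (hb : 0 ≤ b) (h : c^2 ≤ a*b) :
    0 ≤ a + b + 2*c := by
  nlinarith [sq_nonneg (a - b), sq_nonneg (a + b + 2*c), sq_nonneg (a + b)]

private lemma key_ineq (α β γ δ Zw Zv P : ℤ) (hβ : 0 < β) (hδ : 0 < δ)
    (hZw : Zw ≤ 0) (hZv : Zv ≤ 0)
    (hu : 0 ≤ 2*α*β - 2*β^2 + Zw) (hs : 0 ≤ 2*γ*δ - 2*δ^2 + Zv)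
    (hCS : P^2 ≤ Zw*Zv) :
    0 ≤ α*δ + β*γ - 2*β*δ + P := by
  have h1 : (β*δ*P)^2 ≤ (δ^2*(-Zw)) * (β^2*(-Zv)) := by nlinarith [sq_nonneg (β*δ)]
  have h2 : 0 ≤ δ^2*(-Zw) + β^2*(-Zv) + 2*(β*δ*P) :=
    amgm_aux _ _ _ (mul_nonneg (sq_nonneg δ) (by linarith))
      (mul_nonneg (sq_nonneg β) (by linarith)) h1
  have h3 : 0 ≤ 2*β*δ*(α*δ + β*γ - 2*β*δ + P) := by
    nlinarith [mul_nonneg (sq_nonneg δ) hu, mul_nonneg (sq_nonneg β) hs]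
  by_contra hcon
  push_neg at hcon
  nlinarith [mul_pos hβ hδ]

private lemma key_ineq' (α β γ δ Zw Zv P : ℤ) (hβ : 0 < β) (hδ : 0 < δ)
    (hZw : Zw ≤ 0) (hZv : Zv ≤ 0)
    (hu : 0 ≤ 2*α*β - 2*β^2 + Zw) (hs : 0 < 2*γ*δ - 2*δ^2 + Zv)
    (hCS : P^2 ≤ Zw*Zv) :
    0 < α*δ + β*γ - 2*β*δ + P := by
  have h1 : (β*δ*P)^2 ≤ (δ^2*(-Zw)) * (β^2*(-Zv)) := by nlinarith [sq_nonneg (β*δ)]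
  have h2 : 0 ≤ δ^2*(-Zw) + β^2*(-Zv) + 2*(β*δ*P) :=
    amgm_aux _ _ _ (mul_nonneg (sq_nonneg δ) (by linarith))
      (mul_nonneg (sq_nonneg β) (by linarith)) h1
  have hβ2 : (0:ℤ) < β^2 := by positivity
  have h3 : 0 < 2*β*δ*(α*δ + β*γ - 2*β*δ + P) := by
    nlinarith [mul_nonneg (sq_nonneg δ) hu, mul_pos hβ2 hs]
  by_contra hcon
  push_neg at hcon
  nlinarith [mul_pos hβ hδ]

set_option maxHeartbeats 1600000 in
/-- Proposition 4.4: let `W` be an even negative definite lattice that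
is not a root overlattice and such that `W(−1)` has covering radius at most `√2`
(equivalently: every point `z/y` with `z ∈ W`, `y ≥ 1`, is within distance `√2` of a
lattice point).  In `L = U ⊕ W`, with the basis `e, f` of `U` satisfying `e² = 0`,
`f² = −2`, `e.f = 1` and `e` lying in the fundamental domain `𝒟_L`, every positive
`(−2)`-root `r` with `e.r ≥ 2` is not simple: there is a positive `(−2)`-root `r'`
with `e.r' = 1` and `r.r' < 0`. -/
theorem stmt10 (L : Type*) [AddCommGroup L] [Module ℤ L]
    [Module.Free ℤ L] [Module.Finite ℤ L]
    (B : L →ₗ[ℤ] L →ₗ[ℤ] ℤ)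
    (hsym : ∀ x y : L, B x y = B y x)
    (heven : ∀ x : L, ∃ c : ℤ, B x x = 2 * c)
    (hnondeg : ∀ x : L, (∀ y : L, B x y = 0) → x = 0)
    (e f : L) (W₀ : Submodule ℤ L)
    (hee : B e e = 0) (hff : B f f = -2) (hef : B e f = 1)
    (heW : ∀ u ∈ W₀, B e u = 0) (hfW : ∀ u ∈ W₀, B f u = 0)
    -- L = U ⊕ W
    (hspan : ∀ v : L, ∃ (a b : ℤ) (u : L), u ∈ W₀ ∧ v = a • e + b • f + u)
    -- W is negative definite
    (hWneg : ∀ u ∈ W₀, u ≠ 0 → B u u < 0)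
    -- W is not a root overlattice
    (hWnotroot :
      Module.finrank ℤ ↥(Submodule.span ℤ {u : L | u ∈ W₀ ∧ B u u = -2})
        < Module.finrank ℤ ↥W₀)
    -- W(−1) has covering radius at most √2
    (hcov : ∀ u ∈ W₀, ∀ yy : ℤ, 0 < yy →
      ∃ u' ∈ W₀, -(B (u - yy • u') (u - yy • u')) ≤ 2 * yy ^ 2)
    (x₀ : L) (hx₀ : GenericPoint B x₀)
    -- e is a fundamental (in fact, cusp) vector of 𝒟_L
    (hefund : IsFund B x₀ e) :
    ∀ r : L, r ∈ PosRoots B x₀ → 2 ≤ B e r →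
      ¬ IsSimpleRoot B x₀ r ∧
      ∃ r' ∈ PosRoots B x₀, B e r' = 1 ∧ B r r' < 0 := by
  -- smul-bilinearity helpers
  have Bs1 : ∀ (n : ℤ) (x y : L), B (n • x) y = n * B x y := by
    intro n x y
    simp only [← Int.cast_smul_eq_zsmul ℤ, Int.cast_id, map_smul, LinearMap.smul_apply,
      smul_eq_mul]
    simp
  have Bs2 : ∀ (n : ℤ) (x y : L), B x (n • y) = n * B x y := by
    intro n x y
    rw [map_zsmul]
    simp [zsmul_eq_mul]
  have smem : ∀ (n : ℤ) (x : L), x ∈ W₀ → n • x ∈ W₀ := by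
    intro n x hx
    simp only [← Int.cast_smul_eq_zsmul ℤ, Int.cast_id]
    exact Submodule.smul_mem _ _ hx
  have hfe : B f e = 1 := by rw [hsym]; exact hef
  have hWe : ∀ u ∈ W₀, B u e = 0 := fun u hu => by rw [hsym]; exact heW u hu
  have hWf : ∀ u ∈ W₀, B u f = 0 := fun u hu => by rw [hsym]; exact hfW u hu
  have Wnonpos : ∀ u ∈ W₀, B u u ≤ 0 := by
    intro u hu
    by_cases h : u = 0
    · simp [h]
    · exact (hWneg u hu h).le
  -- the pairing formula in coordinates
  have pair : ∀ (a b : ℤ) (w : L), w ∈ W₀ → ∀ (c d : ℤ) (v : L), v ∈ W₀ →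
      B (a • e + b • f + w) (c • e + d • f + v) = a*d + b*c - 2*(b*d) + B w v := by
    intro a b w hw c d v hv
    simp only [map_add, LinearMap.add_apply, Bs1, Bs2, hee, hef, hff, hfe,
      heW v hv, hfW v hv, hWe w hw, hWf w hw]
    ring
  have Be : ∀ (a b : ℤ) (w : L), w ∈ W₀ → B e (a • e + b • f + w) = b := by
    intro a b w hw
    simp only [map_add, Bs2, hee, hef, heW w hw, mul_zero, mul_one, zero_add, add_zero]
  -- Cauchy–Schwarz on W₀
  have CS : ∀ w ∈ W₀, ∀ v ∈ W₀, (B w v)^2 ≤ B w w * B v v := by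
    intro w hw v hv
    by_cases hw0 : w = 0
    · simp [hw0]
    have hA : 0 < -(B w w) := by linarith [hWneg w hw hw0]
    have hmem : (-(B w w)) • v + (B w v) • w ∈ W₀ :=
      Submodule.add_mem _ (smem _ _ hv) (smem _ _ hw)
    have h0 := Wnonpos _ hmem
    simp only [map_add, LinearMap.add_apply, Bs1, Bs2, hsym v w] at h0
    nlinarith [h0, hA]
  -- main argument
  intro r hrpos hy2
  obtain ⟨a, b, z, hzW, hr⟩ := hspan r
  obtain ⟨p, q, t, htW, hx0⟩ := hspan x₀
  have hbe : B e r = b := by rw [hr]; exact Be a b z hzW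
  have hb2 : (2:ℤ) ≤ b := hbe ▸ hy2
  have hbpos : (0:ℤ) < b := by linarith
  have hq : B e x₀ = q := by rw [hx0]; exact Be p q t htW
  have hq0 : (0:ℤ) ≤ q := hq ▸ hefund.2.1
  have hx0sq : B x₀ x₀ = p*q + q*p - 2*(q*q) + B t t := by
    rw [hx0]; exact pair p q t htW p q t htW
  have hqpos : (0:ℤ) < q := by
    rcases lt_or_eq_of_le hq0 with h | h
    · exact h
    · exfalso
      have htt : B t t ≤ 0 := Wnonpos t htW
      have hp := hx₀.1
      rw [hx0sq, ← h] at hp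
      nlinarith [hp, htt]
  have hBrr : B r r = a*b + b*a - 2*(b*b) + B z z := by
    rw [hr]; exact pair a b z hzW a b z hzW
  have hrr : 2*a*b - 2*b^2 + B z z = -2 := by
    rw [hrpos.1] at hBrr
    nlinarith [hBrr]
  -- the covering radius hypothesis produces z'
  obtain ⟨z', hz'W, hcv⟩ := hcov z hzW b hbpos
  have hexp : B (z - b • z') (z - b • z') = B z z - 2*b*(B z z') + b^2*(B z' z') := by
    have h1 : B z' z = B z z' := hsym z' z
    simp only [map_sub, LinearMap.sub_apply, Bs1, Bs2, h1]
    ring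
  rw [hexp] at hcv
  obtain ⟨c', hc'⟩ := heven z'
  rw [hc'] at hcv
  -- construct r'
  obtain ⟨r', hr'def⟩ : ∃ r' : L, r' = (-c') • e + (1:ℤ) • f + z' := ⟨_, rfl⟩
  have hr'sq : B r' r' = -2 := by
    rw [hr'def, pair (-c') 1 z' hz'W (-c') 1 z' hz'W, hc']; ring
  have hber' : B e r' = 1 := by rw [hr'def]; exact Be (-c') 1 z' hz'W
  have hrr'eq : B r r' = a*1 + b*(-c') - 2*(b*1) + B z z' := by
    rw [hr, hr'def]; exact pair a b z hzW (-c') 1 z' hz'W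
  have hrr'neg : B r r' < 0 := by
    rw [hrr'eq]
    by_contra hcon
    push_neg at hcon
    have h1 : 0 ≤ 2*b*(a*1 + b*(-c') - 2*(b*1) + B z z') :=
      mul_nonneg (by linarith) hcon
    nlinarith [hcv, hrr, h1]
  -- r' is a positive root
  have hx0r' : 0 < B x₀ r' := by
    rcases (hx₀.2 r' hr'sq).lt_or_gt with h | h
    · exfalso
      have hneg : (-r') ∈ PosRoots B x₀ := by
        refine ⟨?_, ?_⟩
        · simp only [map_neg, LinearMap.neg_apply, neg_neg]; exact hr'sq
        · rw [map_neg]; linarith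
      have h2 := hefund.2.2 _ hneg
      rw [map_neg (B e) r', hber'] at h2
      linarith
    · exact h
  have hr'pos : r' ∈ PosRoots B x₀ := ⟨hr'sq, hx0r'⟩
  refine ⟨?_, r', hr'pos, hber', hrr'neg⟩
  -- now show r is not simple
  intro hsimple
  have hbes : B e (r - r') = b - 1 := by rw [map_sub, hbe, hber']
  have hsne : r - r' ≠ 0 := by
    intro h0
    rw [h0, map_zero] at hbes
    linarith
  have hr'ner : r' ≠ r := by
    intro hEq
    have h1 := hber'
    rw [hEq, hbe] at h1
    linarith
  have hXle : B r r' ≤ -1 := by linarith [Int.lt_iff_add_one_le.mp hrr'neg]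
  have hssq : B (r - r') (r - r') = -4 - 2*(B r r') := by
    have h1 : B r' r = B r r' := hsym r' r
    simp only [map_sub, LinearMap.sub_apply, h1, hrpos.1, hr'sq]
    ring
  by_cases hX1 : B r r' = -1
  · -- r - r' is a (-2)-root, hence positive, hence a positive vector
    have hssq2 : B (r - r') (r - r') = -2 := by rw [hssq, hX1]; ring
    have hx0s : 0 < B x₀ (r - r') := by
      rcases (hx₀.2 _ hssq2).lt_or_gt with h | h
      · exfalso
        have hneg : (-(r - r')) ∈ PosRoots B x₀ := by
          refine ⟨?_, ?_⟩
          · simp only [map_neg, LinearMap.neg_apply, neg_neg]; exact hssq2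
          · rw [map_neg]; linarith
        have h2 := hefund.2.2 _ hneg
        rw [map_neg (B e) (r - r'), hbes] at h2
        linarith
      · exact h
    exact (hsimple.2 r' hr'pos hr'ner)
      ⟨hsne, fun u hu => by rw [hsym]; exact hu.2.2 _ ⟨hssq2, hx0s⟩⟩
  · -- B r r' ≤ -2, so (r - r')² ≥ 0 and the cone argument applies
    have hXlt : B r r' < -1 := lt_of_le_of_ne hXle hX1
    have hXle2 : B r r' ≤ -2 := by linarith [Int.lt_iff_add_one_le.mp hXlt]
    have hssqnn : 0 ≤ B (r - r') (r - r') := by rw [hssq]; linarith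
    have hszW : z - z' ∈ W₀ := Submodule.sub_mem _ hzW hz'W
    have hscoord : r - r' = (a + c') • e + (b - 1) • f + (z - z') := by
      rw [hr, hr'def]
      simp only [add_zsmul, sub_zsmul, neg_zsmul, one_zsmul]
      abel
    have hs2 : B (r - r') (r - r') =
        (a+c')*(b-1) + (b-1)*(a+c') - 2*((b-1)*(b-1)) + B (z-z') (z-z') := by
      rw [hscoord]; exact pair (a+c') (b-1) _ hszW (a+c') (b-1) _ hszW
    refine (hsimple.2 r' hr'pos hr'ner) ⟨hsne, ?_⟩
    intro u hu
    obtain ⟨α, β, w, hwW, hud⟩ := hspan u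
    have huu : B u u = α*β + β*α - 2*(β*β) + B w w := by
      rw [hud]; exact pair α β w hwW α β w hwW
    have hux0 : B u x₀ = α*q + β*p - 2*(β*q) + B w t := by
      rw [hud, hx0]; exact pair α β w hwW p q t htW
    have hus : B u (r - r') = α*(b-1) + β*(a+c') - 2*(β*(b-1)) + B w (z-z') := by
      rw [hud, hscoord]; exact pair α β w hwW (a+c') (b-1) _ hszW
    rw [hsym (r - r') u, hus]
    rcases lt_trichotomy β 0 with hβ | hβ | hβ
    · exfalso
      have hk := key_ineq' (-α) (-β) p q (B w w) (B t t) (-(B w t))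
        (by linarith) hqpos (Wnonpos w hwW) (Wnonpos t htW)
        (by nlinarith [hu.1, huu]) (by nlinarith [hx₀.1, hx0sq])
        (by rw [neg_sq]; exact CS w hwW t htW)
      nlinarith [hu.2.1, hux0, hk]
    · subst hβ
      have hw0 : w = 0 := by
        by_contra hcon
        have h1 := hWneg w hwW hcon
        have h2 := hu.1
        simp only [mul_zero, zero_mul, sub_zero, zero_add, add_zero] at huu
        linarith
      have hα : (0:ℤ) ≤ α := by
        by_contra hcon
        push_neg at hcon
        rw [hw0] at hux0
        simp only [map_zero, LinearMap.zero_apply, add_zero, zero_mul, mul_zero,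
          sub_zero] at hux0
        have h3 := mul_neg_of_neg_of_pos hcon hqpos
        have h4 := hu.2.1
        linarith
      rw [hw0]
      simp only [map_zero, LinearMap.zero_apply, add_zero, zero_mul, mul_zero, sub_zero]
      exact mul_nonneg hα (by linarith)
    · have hk := key_ineq α β (a+c') (b-1) (B w w) (B (z-z') (z-z')) (B w (z-z'))
        hβ (by linarith) (Wnonpos w hwW) (Wnonpos _ hszW)
        (by nlinarith [hu.1, huu]) (by nlinarith [hssqnn, hs2])
        (CS w hwW _ hszW)
      linarith [hk]
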